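/- Let G be a group and n ≥ 1. The n-pivot 𝒫ⁿ(G) = {(x₁, …, xₙ) ∈ Gⁿ : x₁⋯xₙ ∈ Z(G)} is closed under the operation (x₁, …, xₙ) ▷ (y₁, …, yₙ) = (yₙ⁻¹ xₙ y₁, y₁⁻¹ x₁ y₂, …, y_{n-1}⁻¹ x_{n-1} yₙ), and this operation makes 𝒫ⁿ(G) a quandle. -/

import Mathlib

private lemma pivot_tele {G : Type*} [Group G] (n : ℕ) (f g : ℕ → G) :
    (List.ofFn (fun i : Fin n => (g i)⁻¹ * f i * g (i + 1))).prod
      = (g 0)⁻¹ * (List.ofFn (fun i : Fin n => f i)).prod * g n := by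
  induction n with
  | zero => simp
  | succ m ih =>
      rw [List.ofFn_succ' (fun i : Fin (m+1) => (g i)⁻¹ * f i * g (i + 1)),
        List.ofFn_succ' (fun i : Fin (m+1) => f (i : ℕ))]
      simp only [List.concat_eq_append, List.prod_append, List.prod_cons, List.prod_nil,
        Fin.coe_castSucc, Fin.val_last, mul_one]
      rw [ih]
      group

private lemma pivot_rot1 {G : Type*} [Group G] {m : ℕ} (x : Fin (m+1) → G)
    (hx : (List.ofFn x).prod ∈ Subgroup.center G) :
    (List.ofFn (fun i => x (i - 1))).prod = (List.ofFn x).prod := by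
  have h0 : (0 : Fin (m+1)) - 1 = Fin.last m := by
    rw [zero_sub]; exact Fin.ext Fin.coe_neg_one
  have hs : ∀ j : Fin m, j.succ - 1 = j.castSucc := by
    intro j; rw [← Fin.coeSucc_eq_succ, add_sub_cancel_right]
  have hA : (List.ofFn x).prod
      = (List.ofFn (fun j : Fin m => x j.castSucc)).prod * x (Fin.last m) := by
    rw [List.ofFn_succ' x]; simp
  rw [List.ofFn_succ (f := fun i => x (i - 1))]
  simp only [h0, hs, List.prod_cons]
  set A := (List.ofFn (fun j : Fin m => x j.castSucc)).prod with hAdef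
  have hc := Subgroup.mem_center_iff.mp hx A
  calc x (Fin.last m) * A = A⁻¹ * (A * x (Fin.last m)) * A := by group
    _ = A⁻¹ * (List.ofFn x).prod * A := by rw [← hA]
    _ = (List.ofFn x).prod := by rw [mul_assoc, ← hc, ← mul_assoc, inv_mul_cancel, one_mul]

private lemma pivot_rot2 {G : Type*} [Group G] {m : ℕ} (z : Fin (m+1) → G)
    (hz : (List.ofFn z).prod ∈ Subgroup.center G) :
    (List.ofFn (fun i => z (i + 1))).prod = (List.ofFn z).prod := by
  have h0 : Fin.last m + 1 = 0 := by
    apply Fin.ext; simp [Fin.add_def]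
  have hs : ∀ j : Fin m, j.castSucc + 1 = j.succ := by
    intro j; exact Fin.coeSucc_eq_succ
  have hB : (List.ofFn z).prod = z 0 * (List.ofFn (fun j : Fin m => z j.succ)).prod := by
    rw [List.ofFn_succ (f := z)]; simp
  rw [List.ofFn_succ' (fun i => z (i + 1))]
  simp only [h0, hs, List.concat_eq_append, List.prod_append, List.prod_cons, List.prod_nil,
    mul_one]
  set B := (List.ofFn (fun j : Fin m => z j.succ)).prod with hBdef
  have hc := Subgroup.mem_center_iff.mp hz (z 0)
  calc B * z 0 = (z 0)⁻¹ * (z 0 * B) * z 0 := by group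
    _ = (z 0)⁻¹ * (List.ofFn z).prod * z 0 := by rw [← hB]
    _ = (List.ofFn z).prod := by rw [mul_assoc, ← hc, ← mul_assoc, inv_mul_cancel, one_mul]

/-- The `n`-pivot `𝒫ⁿ(G) = {x ∈ Gⁿ : x₁⋯xₙ ∈ Z(G)}` is closed under
`(x ▷ y)ᵢ = y_{i-1}⁻¹ x_{i-1} y_i` (indices cyclic), and this operation makes it a
quandle. -/
theorem pivot_quandle (G : Type*) [Group G] (n : ℕ) [NeZero n] :
    let op : (Fin n → G) → (Fin n → G) → (Fin n → G) :=
      fun x y i => (y (i - 1))⁻¹ * x (i - 1) * y i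
    let P : Set (Fin n → G) := {x | (List.ofFn x).prod ∈ Subgroup.center G}
    (∀ x ∈ P, ∀ y ∈ P, op x y ∈ P) ∧
    (∀ x ∈ P, op x x = x) ∧
    (∀ y ∈ P, Set.BijOn (fun x => op x y) P P) ∧
    (∀ x ∈ P, ∀ y ∈ P, ∀ z ∈ P, op (op x y) z = op (op x z) (op y z)) := by
  intro op P
  obtain ⟨m, rfl⟩ : ∃ m, n = m + 1 := ⟨n - 1, (Nat.succ_pred_eq_of_ne_zero (NeZero.ne n)).symm⟩
  -- closure (y need not be in P)
  have hclosed : ∀ x ∈ P, ∀ y : Fin (m+1) → G, op x y ∈ P := by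
    intro x hx y
    simp only [P, Set.mem_setOf_eq] at hx ⊢
    open Fin.NatCast in
    have key := pivot_tele (m+1) (fun k : ℕ => x ((k : Fin (m+1)) - 1))
      (fun k : ℕ => y ((k : Fin (m+1)) - 1))
    open Fin.NatCast in have h1 : (((m+1 : ℕ)) : Fin (m+1)) = 0 := Fin.natCast_self (m+1)
    rw [h1] at key
    simp only [Fin.cast_val_eq_self, Nat.cast_add, Nat.cast_one, Nat.cast_zero,
      add_sub_cancel_right] at key
    rw [pivot_rot1 x hx] at key
    show (List.ofFn fun i : Fin (m+1) => (y (i - 1))⁻¹ * x (i - 1) * y i).prod ∈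
      Subgroup.center G
    rw [key]
    have hc := Subgroup.mem_center_iff.mp hx (y ((0 : Fin (m+1)) - 1))
    rw [mul_assoc, ← hc, ← mul_assoc, inv_mul_cancel, one_mul]
    exact hx
  refine ⟨fun x hx y _ => hclosed x hx y, ?_, ?_, ?_⟩
  · intro x _
    funext i
    simp only [op]
    group
  · intro y hy
    set invf : (Fin (m+1) → G) → Fin (m+1) → G :=
      fun z j => y j * z (j + 1) * (y (j + 1))⁻¹ with hinvf
    have hmaps2 : Set.MapsTo invf P P := by
      intro z hz
      simp only [P, Set.mem_setOf_eq] at hz ⊢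
      open Fin.NatCast in
      have key := pivot_tele (m+1) (fun k : ℕ => z ((k : Fin (m+1)) + 1))
        (fun k : ℕ => (y (k : Fin (m+1)))⁻¹)
      open Fin.NatCast in have h1 : (((m+1 : ℕ)) : Fin (m+1)) = 0 := Fin.natCast_self (m+1)
      rw [h1] at key
      simp only [Fin.cast_val_eq_self, Nat.cast_add, Nat.cast_one, Nat.cast_zero,
        inv_inv] at key
      rw [pivot_rot2 z hz] at key
      show (List.ofFn fun j : Fin (m+1) => y j * z (j + 1) * (y (j + 1))⁻¹).prod ∈
        Subgroup.center G
      rw [key]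
      have hc := Subgroup.mem_center_iff.mp hz (y (0 : Fin (m+1)))
      rw [hc, mul_assoc, mul_inv_cancel, mul_one]
      exact hz
    have hinv : Set.InvOn invf (fun x => op x y) P P := by
      constructor
      · intro x _
        funext j
        simp only [hinvf, op, add_sub_cancel_right]
        group
      · intro z _
        funext j
        simp only [hinvf, op, sub_add_cancel]
        group
    exact hinv.bijOn (fun x hx => hclosed x hx y) hmaps2
  · intro x _ y _ z _
    funext i
    simp only [op]
    group
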